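/- Let X be a pure d-dimensional simplicial complex and let σ ∈ X(k+i) be a face with i ≥ 1. For any core c ∈ C(σ, k), the weight of the representation r_c(σ) in the representation complex R̂_k(X) equals w_X(σ) / C(k+i+1, k), where w denotes the standard weight function. -/

import Mathlib

/-- The core of a collection of finite sets: the elements common to all of them. -/
def coreOf {α : Type*} [DecidableEq α] (S : Finset (Finset α)) : Finset α :=
  (S.sup id).filter (fun x => ∀ t ∈ S, x ∈ t)

/-- The `k`-dimensional representation complex of `X`: its vertices are the
`k`-faces of `X`, and its `i`-faces (for `i ≥ 1`) are collections of `i+1`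
`k`-faces whose union is a `(k+i)`-face of `X` and whose common intersection
has exactly `k` elements. -/
def repCplx {α : Type*} [DecidableEq α] (X : Finset (Finset α)) (k : ℕ) :
    Finset (Finset (Finset α)) :=
  ((X.filter (fun t => t.card = k + 1)).powerset).filter
    (fun r => r.Nonempty ∧ r.sup id ∈ X ∧ (r.sup id).card = k + r.card ∧
      (2 ≤ r.card → (coreOf r).card = k))

/-- Top-dimensional faces of a `D`-dimensional complex. -/
def topFaces {β : Type*} [DecidableEq β] (Y : Finset (Finset β)) (D : ℕ) :
    Finset (Finset β) :=
  Y.filter (fun τ => τ.card = D + 1)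

/-- The standard weight of a face of a `D`-dimensional complex. -/
def faceWeight {β : Type*} [DecidableEq β] (Y : Finset (Finset β)) (D : ℕ)
    (σ : Finset β) : ℚ :=
  (((topFaces Y D).filter (fun τ => σ ⊆ τ)).card : ℚ) /
    (((D + 1).choose σ.card : ℚ) * ((topFaces Y D).card : ℚ))


open Finset

namespace RepAux
variable {α : Type*} [DecidableEq α]

def rep (c T : Finset α) : Finset (Finset α) := (T \ c).image (fun v => insert v c)

lemma card_rep (c T : Finset α) : (rep c T).card = (T \ c).card := by
  apply card_image_of_injOn
  intro u hu v hv h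
  have hu' : u ∉ c := (mem_sdiff.mp hu).2
  have hv' : v ∉ c := (mem_sdiff.mp hv).2
  have h' : insert u c = insert v c := h
  have hm : u ∈ insert v c := by rw [← h']; exact mem_insert_self u c
  rcases mem_insert.mp hm with h | h
  · exact h
  · exact absurd h hu'

lemma sup_rep {c T : Finset α} (hc : c ⊆ T) (h : (T \ c).Nonempty) :
    (rep c T).sup id = T := by
  apply subset_antisymm
  · intro x hx
    rcases Finset.mem_sup.mp hx with ⟨t, ht, hxt⟩
    rcases mem_image.mp ht with ⟨v, hv, rfl⟩
    exact (insert_subset (mem_sdiff.mp hv).1 hc) hxt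
  · intro x hx
    rcases h with ⟨w, hw⟩
    by_cases hxc : x ∈ c
    · exact Finset.mem_sup.mpr ⟨_, mem_image_of_mem _ hw, mem_insert_of_mem hxc⟩
    · exact Finset.mem_sup.mpr ⟨_, mem_image_of_mem _ (mem_sdiff.mpr ⟨hx, hxc⟩),
        mem_insert_self x c⟩

lemma core_rep {c T : Finset α} (hc : c ⊆ T) (h2 : 2 ≤ (T \ c).card) :
    coreOf (rep c T) = c := by
  have hne : (T \ c).Nonempty := card_pos.mp (by omega)
  ext x
  simp only [coreOf, mem_filter, sup_rep hc hne]
  constructor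
  · rintro ⟨hxT, hall⟩
    obtain ⟨u, hu, v, hv, huv⟩ := Finset.one_lt_card.mp h2
    have h1 := hall _ (mem_image_of_mem _ hu)
    have h2 := hall _ (mem_image_of_mem _ hv)
    rcases mem_insert.mp h1 with rfl | h
    · rcases mem_insert.mp h2 with rfl | h
      · exact absurd rfl huv
      · exact h
    · exact h
  · intro hxc
    refine ⟨hc hxc, ?_⟩
    intro t ht
    rcases mem_image.mp ht with ⟨v, _, rfl⟩
    exact mem_insert_of_mem hxc

/-- Characterization of top faces of the representation complex (forward). -/
lemma topFace_rep_eq {X : Finset (Finset α)} {d k : ℕ} (hk : k + 2 ≤ d + 1)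
    {r : Finset (Finset α)} (hr : r ∈ topFaces (repCplx X k) (d - k)) :
    r.sup id ∈ topFaces X d ∧ coreOf r ⊆ r.sup id ∧ (coreOf r).card = k ∧
      r = rep (coreOf r) (r.sup id) := by
  rw [topFaces, mem_filter, repCplx, mem_filter, mem_powerset] at hr
  obtain ⟨⟨hsub, _, hsupX, hsupcard, hcore⟩, hcard⟩ := hr
  have hk' : k ≤ d := by omega
  have hrc : r.card = d - k + 1 := hcard
  have hTcard : (r.sup id).card = d + 1 := by rw [hsupcard, hrc]; omega
  have hcore2 : (coreOf r).card = k := hcore (by omega)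
  have hcsub : coreOf r ⊆ r.sup id := filter_subset _ _
  have hcall : ∀ x ∈ coreOf r, ∀ t ∈ r, x ∈ t := by
    intro x hx; exact (mem_filter.mp hx).2
  refine ⟨mem_filter.mpr ⟨hsupX, hTcard⟩, hcsub, hcore2, ?_⟩
  have hrsub : r ⊆ rep (coreOf r) (r.sup id) := by
    intro t ht
    have htX := hsub ht
    rw [mem_filter] at htX
    have htc : t.card = k + 1 := htX.2
    have hct : coreOf r ⊆ t := fun x hx => hcall x hx t ht
    have h1 : (t \ coreOf r).card = 1 := by
      rw [card_sdiff_of_subset hct, htc, hcore2]; omega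
    obtain ⟨v, hv⟩ := card_eq_one.mp h1
    have hvt : v ∈ t \ coreOf r := hv ▸ mem_singleton_self v
    have : t = insert v (coreOf r) := by
      apply subset_antisymm
      · intro x hx
        by_cases hxc : x ∈ coreOf r
        · exact mem_insert_of_mem hxc
        · have : x ∈ t \ coreOf r := mem_sdiff.mpr ⟨hx, hxc⟩
          rw [hv, mem_singleton] at this
          exact this ▸ mem_insert_self x _
      · exact insert_subset (mem_sdiff.mp hvt).1 hct
    rw [this]
    apply mem_image_of_mem
    exact mem_sdiff.mpr ⟨Finset.mem_sup.mpr ⟨t, ht, (mem_sdiff.mp hvt).1⟩,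
      (mem_sdiff.mp hvt).2⟩
  refine eq_of_subset_of_card_le hrsub ?_
  rw [card_rep, card_sdiff_of_subset hcsub, hTcard, hcore2, hrc]
  omega

/-- Characterization of top faces of the representation complex (backward). -/
lemma rep_mem_topFaces {X : Finset (Finset α)} {d k : ℕ}
    (hclosed : ∀ τ ∈ X, ∀ σ ⊆ τ, σ ∈ X) (hk : k + 2 ≤ d + 1)
    {T c : Finset α} (hT : T ∈ topFaces X d) (hcT : c ⊆ T) (hck : c.card = k) :
    rep c T ∈ topFaces (repCplx X k) (d - k) := by
  rw [topFaces, mem_filter] at hT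
  obtain ⟨hTX, hTcard⟩ := hT
  have hsd : (T \ c).card = d + 1 - k := by rw [card_sdiff_of_subset hcT, hTcard, hck]
  have hsd2 : 2 ≤ (T \ c).card := by omega
  have hne : (T \ c).Nonempty := card_pos.mp (by omega)
  have hrcard : (rep c T).card = d - k + 1 := by rw [card_rep, hsd]; omega
  rw [topFaces, mem_filter, repCplx, mem_filter, mem_powerset]
  refine ⟨⟨?_, ?_, ?_, ?_, ?_⟩, hrcard⟩
  · intro t ht
    rcases mem_image.mp ht with ⟨v, hv, rfl⟩
    rw [mem_filter]
    refine ⟨hclosed T hTX _ (insert_subset (mem_sdiff.mp hv).1 hcT), ?_⟩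
    rw [card_insert_of_notMem (mem_sdiff.mp hv).2, hck]
  · exact hne.image _
  · rw [sup_rep hcT hne]; exact hTX
  · rw [sup_rep hcT hne, hTcard, hrcard]; omega
  · intro _; rw [core_rep hcT hsd2, hck]

end RepAux

namespace RepAux
variable {α : Type*} [DecidableEq α]

lemma card_topFaces_repCplx {X : Finset (Finset α)} {d k : ℕ}
    (hclosed : ∀ τ ∈ X, ∀ σ ⊆ τ, σ ∈ X) (hk : k + 2 ≤ d + 1) :
    (topFaces (repCplx X k) (d - k)).card = (d + 1).choose k * (topFaces X d).card := by
  have h1 : (topFaces (repCplx X k) (d - k)).card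
      = ((topFaces X d).sigma (fun T => T.powersetCard k)).card := by
    apply Finset.card_bij' (fun r _ => (⟨r.sup id, coreOf r⟩ : Σ _ : Finset α, Finset α))
      (fun p _ => rep p.2 p.1)
    · intro r hr
      obtain ⟨h1, h2, h3, _⟩ := topFace_rep_eq hk hr
      exact mem_sigma.mpr ⟨h1, mem_powersetCard.mpr ⟨h2, h3⟩⟩
    · intro p hp
      rw [mem_sigma, mem_powersetCard] at hp
      exact rep_mem_topFaces hclosed hk hp.1 hp.2.1 hp.2.2
    · intro r hr
      exact (topFace_rep_eq hk hr).2.2.2.symm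
    · intro p hp
      rw [mem_sigma, mem_powersetCard] at hp
      have hT := hp.1
      have hcT := hp.2.1
      have hck := hp.2.2
      have hTcard : p.1.card = d + 1 := (mem_filter.mp hT).2
      have hsd : (p.1 \ p.2).card = d + 1 - k := by rw [card_sdiff_of_subset hcT, hTcard, hck]
      have hne : (p.1 \ p.2).Nonempty := card_pos.mp (by omega)
      have h2 : 2 ≤ (p.1 \ p.2).card := by omega
      ext : 1
      · simp [sup_rep hcT hne]
      · simp only [sup_rep hcT hne, core_rep hcT h2]
        exact heq_of_eq rfl
  rw [h1, Finset.card_sigma]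
  rw [Finset.sum_congr rfl (fun T hT => ?_), Finset.sum_const, smul_eq_mul, mul_comm]
  rw [card_powersetCard, (mem_filter.mp hT).2]

lemma core_eq_of_rep_subset {X : Finset (Finset α)} {d k i : ℕ}
    (hk : k + 2 ≤ d + 1) (hi : 1 ≤ i)
    {σ c : Finset α} (hσ : σ.card = k + i + 1) (hc : c ⊆ σ) (hck : c.card = k)
    {r : Finset (Finset α)} (hr : r ∈ topFaces (repCplx X k) (d - k))
    (hsub : rep c σ ⊆ r) :
    coreOf r = c ∧ r = rep c (r.sup id) ∧ σ ⊆ r.sup id := by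
  obtain ⟨hT, hcsub, hcore, hreq⟩ := topFace_rep_eq hk hr
  have hsd : (σ \ c).card = i + 1 := by rw [card_sdiff_of_subset hc, hσ, hck]; omega
  obtain ⟨u, hu, v, hv, huv⟩ := Finset.one_lt_card.mp (show 1 < (σ \ c).card by omega)
  have hcall : ∀ x ∈ coreOf r, ∀ t ∈ r, x ∈ t := fun x hx => (mem_filter.mp hx).2
  have hcc : coreOf r ⊆ c := by
    intro x hx
    have h1 := hcall x hx _ (hsub (mem_image_of_mem _ hu))
    have h2 := hcall x hx _ (hsub (mem_image_of_mem _ hv))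
    rcases mem_insert.mp h1 with rfl | h
    · rcases mem_insert.mp h2 with rfl | h
      · exact absurd rfl huv
      · exact h
    · exact h
  have hcore_eq : coreOf r = c := eq_of_subset_of_card_le hcc (by rw [hcore, hck])
  refine ⟨hcore_eq, hcore_eq ▸ hreq, ?_⟩
  intro x hx
  by_cases hxc : x ∈ c
  · exact hcsub (hcore_eq ▸ hxc)
  · have hxd : x ∈ σ \ c := mem_sdiff.mpr ⟨hx, hxc⟩
    exact Finset.mem_sup.mpr ⟨_, hsub (mem_image_of_mem _ hxd), mem_insert_self x c⟩

lemma card_filter_rep {X : Finset (Finset α)} {d k i : ℕ}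
    (hclosed : ∀ τ ∈ X, ∀ σ ⊆ τ, σ ∈ X) (hki : k + i + 1 ≤ d + 1) (hi : 1 ≤ i)
    {σ c : Finset α} (hσ : σ.card = k + i + 1) (hc : c ⊆ σ) (hck : c.card = k) :
    ((topFaces (repCplx X k) (d - k)).filter (fun r => rep c σ ⊆ r)).card
      = ((topFaces X d).filter (fun T => σ ⊆ T)).card := by
  have hk : k + 2 ≤ d + 1 := by omega
  apply Finset.card_bij' (fun r _ => r.sup id) (fun T _ => rep c T)
  · intro r hr
    rw [mem_filter] at hr
    obtain ⟨_, _, h3⟩ := core_eq_of_rep_subset hk hi hσ hc hck hr.1 hr.2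
    exact mem_filter.mpr ⟨(topFace_rep_eq hk hr.1).1, h3⟩
  · intro T hT
    rw [mem_filter] at hT
    have hcT : c ⊆ T := hc.trans hT.2
    refine mem_filter.mpr ⟨rep_mem_topFaces hclosed hk hT.1 hcT hck, ?_⟩
    exact image_subset_image (sdiff_subset_sdiff hT.2 Subset.rfl)
  · intro r hr
    rw [mem_filter] at hr
    exact (core_eq_of_rep_subset hk hi hσ hc hck hr.1 hr.2).2.1.symm
  · intro T hT
    rw [mem_filter] at hT
    have hTcard : T.card = d + 1 := (mem_filter.mp hT.1).2
    have hcT : c ⊆ T := hc.trans hT.2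
    have hne : (T \ c).Nonempty := by
      rw [← card_pos, card_sdiff_of_subset hcT, hTcard, hck]; omega
    exact sup_rep hcT hne

end RepAux

theorem weight_relation_between_complex_and_representation {α : Type*} [DecidableEq α]
    (X : Finset (Finset α)) (d k i : ℕ)
    (hclosed : ∀ τ ∈ X, ∀ σ ⊆ τ, σ ∈ X)
    (hpure : ∀ τ ∈ X, ∃ T ∈ X, T.card = d + 1 ∧ τ ⊆ T)
    (σ c : Finset α) (hσX : σ ∈ X) (hσ : σ.card = k + i + 1) (hi : 1 ≤ i)
    (hc : c ⊆ σ) (hck : c.card = k) :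
    faceWeight (repCplx X k) (d - k) ((σ \ c).image (fun v => insert v c))
      = faceWeight X d σ / ((k + i + 1).choose k : ℚ) := by
  obtain ⟨T0, hT0X, hT0card, hσT0⟩ := hpure σ hσX
  have hki : k + i + 1 ≤ d + 1 := by
    have := Finset.card_le_card hσT0
    omega
  have hrepdef : (σ \ c).image (fun v => insert v c) = RepAux.rep c σ := rfl
  have hcard : (RepAux.rep c σ).card = i + 1 := by
    rw [RepAux.card_rep, Finset.card_sdiff_of_subset hc, hσ, hck]; omega
  rw [hrepdef]
  unfold faceWeight
  rw [RepAux.card_filter_rep hclosed hki hi hσ hc hck,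
    RepAux.card_topFaces_repCplx hclosed (by omega), hcard, hσ, div_div]
  congr 1
  have hid : (d - k + 1).choose (i + 1) * (d + 1).choose k
      = (d + 1).choose (k + i + 1) * (k + i + 1).choose k := by
    rw [Nat.choose_mul (n := d + 1) (by omega : k ≤ k + i + 1)]
    have h1 : d + 1 - k = d - k + 1 := by omega
    have h2 : k + i + 1 - k = i + 1 := by omega
    rw [h1, h2, mul_comm]
  have hq : ((d - k + 1).choose (i + 1) : ℚ) * ((d + 1).choose k : ℚ)
      = ((d + 1).choose (k + i + 1) : ℚ) * ((k + i + 1).choose k : ℚ) := by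
    exact_mod_cast congrArg (fun n : ℕ => (n : ℚ)) hid
  push_cast
  calc ((d - k + 1).choose (i + 1) : ℚ) * (((d + 1).choose k : ℚ) * ((topFaces X d).card : ℚ))
      = (((d - k + 1).choose (i + 1) : ℚ) * ((d + 1).choose k : ℚ)) * ((topFaces X d).card : ℚ) := by
        ring
    _ = (((d + 1).choose (k + i + 1) : ℚ) * ((k + i + 1).choose k : ℚ)) * ((topFaces X d).card : ℚ) := by
        rw [hq]
    _ = ((d + 1).choose (k + i + 1) : ℚ) * ((topFaces X d).card : ℚ) * ((k + i + 1).choose k : ℚ) := by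
        ring
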